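/- Let n ≥ 1 and let P be a real (n+1)×(n+1) matrix with rows and columns indexed by 0,…,n such that P_{i,j} = 0 whenever j ≤ i. Define Q̄_{i,j} recursively by Q̄_{0,j} := P_{0,j} for j > 0, Q̄_{i,j} := Q̄_{i−1,j} + Q̄_{i−1,i}·P_{i,j} for 1 ≤ i < j ≤ n, and Q̄_{i,j} := 0 for j ≤ i. Then for all 0 ≤ i < j ≤ n, Q̄_{i,j} = Σ_{l₁=0}^{i} ( Σ_{l=0}^{l₁} (P^l)_{0,l₁} )·P_{l₁,j}, where (P^l)_{0,l₁} denotes the (0,l₁) entry of the l-th matrix power of P. -/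

import Mathlib

/-- Equivalence of the recursive formula and the matrix-power formula for the
probabilities `Q̄_{i,j}` that the strictly increasing chain with one-step matrix `P`,
started at `0`, jumps in one step from the set `{0,…,i}` into the state `j`. -/
theorem stmt9 (n : ℕ) (hn : 1 ≤ n) (P : Matrix (Fin (n + 1)) (Fin (n + 1)) ℝ)
    (hP : ∀ i j : Fin (n + 1), (j : ℕ) ≤ (i : ℕ) → P i j = 0)
    (Q : Fin (n + 1) → Fin (n + 1) → ℝ)
    (hQbase : ∀ j : Fin (n + 1), 0 < (j : ℕ) → Q 0 j = P 0 j)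
    (hQzero : ∀ i j : Fin (n + 1), (j : ℕ) ≤ (i : ℕ) → Q i j = 0)
    (hQrec : ∀ i i' j : Fin (n + 1), (i' : ℕ) = (i : ℕ) + 1 → (i' : ℕ) < (j : ℕ) →
      Q i' j = Q i j + Q i i' * P i' j) :
    ∀ i j : Fin (n + 1), (i : ℕ) < (j : ℕ) →
      Q i j = ∑ l₁ ∈ Finset.univ.filter (fun l : Fin (n + 1) => (l : ℕ) ≤ (i : ℕ)),
        (∑ l ∈ Finset.range ((l₁ : ℕ) + 1), (P ^ l) 0 l₁) * P l₁ j := by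
  -- entries of P^l vanish below the l-th superdiagonal
  have hpow : ∀ l : ℕ, ∀ a b : Fin (n + 1), (b : ℕ) < l + (a : ℕ) → (P ^ l) a b = 0 := by
    intro l
    induction l with
    | zero =>
      intro a b h
      rw [pow_zero, Matrix.one_apply_ne]
      intro e
      rw [e] at h
      omega
    | succ l ih =>
      intro a b h
      rw [pow_succ', Matrix.mul_apply]
      apply Finset.sum_eq_zero
      intro c _
      rcases le_or_gt (c : ℕ) (a : ℕ) with hc | hc
      · rw [hP a c hc, zero_mul]
      · rw [ih c b (by omega), mul_zero]
  -- the truncated sum defining A(l₁) can be extended to range (n+1)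
  have hA : ∀ l₁ : Fin (n + 1),
      (∑ l ∈ Finset.range ((l₁ : ℕ) + 1), (P ^ l) 0 l₁)
        = ∑ l ∈ Finset.range (n + 1), (P ^ l) 0 l₁ := by
    intro l₁
    apply Finset.sum_subset
    · exact Finset.range_subset_range.2 (by omega)
    · intro l hl hl'
      simp only [Finset.mem_range] at hl hl'
      exact hpow l 0 l₁ (by simp; omega)
  intro i j
  induction' hm : (i : ℕ) with m ih generalizing i j
  · intro hij
    have hi0 : i = 0 := by
      apply Fin.ext; simpa using hm
    subst hi0
    rw [hQbase j (by omega)]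
    have hfilter : Finset.univ.filter (fun l : Fin (n + 1) => (l : ℕ) ≤ 0)
        = {0} := by
      ext l
      simp only [Finset.mem_filter, Finset.mem_univ, true_and, Finset.mem_singleton, Fin.ext_iff, Fin.val_zero, Nat.le_zero]
    rw [hfilter, Finset.sum_singleton]
    simp [Matrix.one_apply]
  · intro hij
    have hmn : m < n + 1 := by omega
    set i0 : Fin (n + 1) := ⟨m, hmn⟩ with hi0
    have hii0 : (i : ℕ) = (i0 : ℕ) + 1 := by simp [hi0, hm]
    have hQ := hQrec i0 i j hii0 (by omega)
    have hQij := ih i0 j rfl (by omega)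
    have hQii' := ih i0 i rfl (by omega)
    rw [hQ, hQij, hQii']
    have hinotmem : i ∉ Finset.univ.filter (fun l : Fin (n + 1) => (l : ℕ) ≤ m) := by
      simp [hm]
    have hsplit : Finset.univ.filter (fun l : Fin (n + 1) => (l : ℕ) ≤ m + 1)
        = insert i (Finset.univ.filter (fun l : Fin (n + 1) => (l : ℕ) ≤ m)) := by
      ext l
      simp only [Finset.mem_filter, Finset.mem_univ, true_and, Finset.mem_insert, Fin.ext_iff]
      omega
    rw [hsplit, Finset.sum_insert hinotmem]
    -- key identity: the recursive "mass" at i equals A(i)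
    have key : (∑ l₁ ∈ Finset.univ.filter (fun l : Fin (n + 1) => (l : ℕ) ≤ m),
          (∑ l ∈ Finset.range ((l₁ : ℕ) + 1), (P ^ l) 0 l₁) * P l₁ i)
        = ∑ l ∈ Finset.range ((i : ℕ) + 1), (P ^ l) 0 i := by
      have step1 : (∑ l₁ ∈ Finset.univ.filter (fun l : Fin (n + 1) => (l : ℕ) ≤ m),
            (∑ l ∈ Finset.range ((l₁ : ℕ) + 1), (P ^ l) 0 l₁) * P l₁ i)
          = ∑ l₁ : Fin (n + 1),
              (∑ l ∈ Finset.range (n + 1), (P ^ l) 0 l₁) * P l₁ i := by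
        rw [Finset.sum_congr rfl (fun l₁ _ => by rw [hA l₁])]
        apply Finset.sum_subset (Finset.filter_subset _ _)
        intro l₁ _ hl₁
        simp only [Finset.mem_filter, Finset.mem_univ, true_and, not_le] at hl₁
        rw [hP l₁ i (by omega), mul_zero]
      rw [step1]
      have step2 : (∑ l₁ : Fin (n + 1), (∑ l ∈ Finset.range (n + 1), (P ^ l) 0 l₁) * P l₁ i)
          = ∑ l ∈ Finset.range (n + 1), (P ^ (l + 1)) 0 i := by
        simp_rw [Finset.sum_mul]
        rw [Finset.sum_comm]
        apply Finset.sum_congr rfl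
        intro l _
        rw [pow_succ, Matrix.mul_apply]
      rw [step2]
      -- shift the index
      have g0 : (P ^ 0) 0 i = 0 := by
        rw [pow_zero, Matrix.one_apply_ne]
        intro e
        rw [← e] at hm
        simp at hm
      have gtop : (P ^ (n + 1)) 0 i = 0 := hpow (n + 1) 0 i (by have := i.isLt; omega)
      have h1 : (∑ l ∈ Finset.range (n + 2), (P ^ l) 0 i)
          = (∑ l ∈ Finset.range (n + 1), (P ^ (l + 1)) 0 i) + (P ^ 0) 0 i :=
        Finset.sum_range_succ' _ (n + 1)
      have h2 : (∑ l ∈ Finset.range (n + 2), (P ^ l) 0 i)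
          = (∑ l ∈ Finset.range (n + 1), (P ^ l) 0 i) + (P ^ (n + 1)) 0 i :=
        Finset.sum_range_succ _ (n + 1)
      have h3 : (∑ l ∈ Finset.range ((i : ℕ) + 1), (P ^ l) 0 i)
          = ∑ l ∈ Finset.range (n + 1), (P ^ l) 0 i := hA i
      rw [h3]
      rw [g0, add_zero] at h1
      rw [gtop, add_zero] at h2
      rw [← h1, h2]
    rw [key]
    ring
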